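/- For the scale-invariant weighted Hölder norms ‖u‖_{r,h,μ,q} := Σ_{|I|=q, |α|≤h} S_{|α|} r^{|α|+q} ‖∂^α u_I‖_{r,μ}, if the weights satisfy S_k ≤ [max_{|α+β|=k} binom(α+β,α)]^{-1} S_j S_{k−j} for all 1 ≤ j ≤ k−1, then the norm is submultiplicative: ‖u ∧ v‖_{r,h,μ,p+q} ≤ ‖u‖_{r,h,μ,q} · ‖v‖_{r,h,μ,p}. -/

import Mathlib

/-- Iterated partial derivative `∂^α` built from a family of commuting derivations
`Dop i` (the partial derivatives on the ball). -/
noncomputable def pderiv {A : Type*} [AddCommGroup A] (N : ℕ) (Dop : Fin N → A →+ A)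
    (α : Fin N → ℕ) : A → A :=
  ((List.finRange N).map fun i => (⇑(Dop i))^[α i]).foldr (· ∘ ·) id

/-- The scale-invariant weighted Hölder norm
`‖u‖_{r,h,μ,q} = Σ_{|I|=q, |α|≤h} S_{|α|} r^{|α|+q} ‖∂^α u_I‖_{r,μ}` of a (0,q)-form `u`
with matrix coefficients `u_I ∈ A`, the norm of `A` playing the role of the Hölder norm
`‖·‖_{r,μ}` (submultiplicative operator-norm based Hölder norm of matrix-valued maps).
The coefficients are indexed by subsets `I ⊆ {1,…,n}` (with `u_I = 0` for `|I| ≠ q`). -/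
noncomputable def hnorm {A : Type*} [NormedRing A] (n N : ℕ) (Dop : Fin N → A →+ A)
    (S : ℕ → ℝ) (r : ℝ) (h : ℕ) (u : Finset (Fin n) → A) : ℝ :=
  ∑ I : Finset (Fin n),
    ∑ α ∈ (Fintype.piFinset fun _ : Fin N => Finset.range (h + 1)).filter
        fun α => (∑ i, α i) ≤ h,
      S (∑ i, α i) * r ^ ((∑ i, α i) + I.card) * ‖pderiv N Dop α (u I)‖

namespace Stmt9Aux

open Finset

/-- forget the `AddMonoidHom` structure into the endomorphism monoid -/
def toEnd {A : Type*} [AddCommMonoid A] (f : A →+ A) : AddMonoid.End A := f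

section EndStuff

variable {A : Type*} [AddCommGroup A] {N : ℕ} (D : Fin N → A →+ A)

/-- product of powers of the derivations over a list of indices -/
noncomputable def prodL (l : List (Fin N)) (α : Fin N → ℕ) : AddMonoid.End A :=
  (l.map fun i => (toEnd (D i)) ^ (α i)).prod

/-- the multi-index derivative as an `AddMonoid.End` -/
noncomputable def PP (α : Fin N → ℕ) : AddMonoid.End A := prodL D (List.finRange N) α

lemma foldr_eq (α : Fin N → ℕ) :
    ∀ l : List (Fin N),
      ((l.map fun i => (⇑(D i))^[α i]).foldr (· ∘ ·) id) = ⇑(prodL D l α)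
  | [] => rfl
  | i :: t => by
    show (⇑(D i))^[α i] ∘ ((t.map fun i => (⇑(D i))^[α i]).foldr (· ∘ ·) id) = _
    rw [foldr_eq α t]
    rfl

lemma pderiv_eq (α : Fin N → ℕ) : pderiv N D α = ⇑(PP D α) := foldr_eq D α _

lemma commute_D (hcomm : ∀ (i j : Fin N) (x : A), D i (D j x) = D j (D i x))
    (i j : Fin N) : Commute (toEnd (D i)) (toEnd (D j)) :=
  DFunLike.ext _ _ fun x => hcomm i j x

lemma commute_prodL (hcomm : ∀ (i j : Fin N) (x : A), D i (D j x) = D j (D i x))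
    (j : Fin N) (l : List (Fin N)) (α : Fin N → ℕ) :
    Commute (toEnd (D j)) (prodL D l α) := by
  induction l with
  | nil => exact Commute.one_right _
  | cons i t ih =>
    show Commute _ ((toEnd (D i)) ^ (α i) * prodL D t α)
    exact (((commute_D D hcomm j i)).pow_right _).mul_right ih

lemma prodL_add (hcomm : ∀ (i j : Fin N) (x : A), D i (D j x) = D j (D i x))
    (l : List (Fin N)) (α β : Fin N → ℕ) :
    prodL D l (α + β) = prodL D l α * prodL D l β := by
  induction l with
  | nil => simp [prodL]
  | cons i t ih =>
    show (toEnd (D i)) ^ ((α + β) i) * prodL D t (α + β) = _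
    rw [Pi.add_apply, pow_add, ih]
    have hc : Commute ((toEnd (D i)) ^ (β i)) (prodL D t α) :=
      ((commute_prodL D hcomm i t α)).pow_left _
    show _ = (toEnd (D i)) ^ (α i) * prodL D t α * ((toEnd (D i)) ^ (β i) * prodL D t β)
    exact hc.mul_mul_mul_comm _ _

lemma prodL_zero (l : List (Fin N)) : prodL D l (0 : Fin N → ℕ) = 1 := by
  induction l with
  | nil => rfl
  | cons i t ih =>
    show (toEnd (D i)) ^ ((0 : Fin N → ℕ) i) * prodL D t 0 = 1
    rw [ih, Pi.zero_apply, pow_zero, one_mul]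

lemma prodL_single (l : List (Fin N)) (i : Fin N) :
    prodL D l (Pi.single i 1) = (toEnd (D i)) ^ (l.count i) := by
  induction l with
  | nil => rfl
  | cons j t ih =>
    show (toEnd (D j)) ^ ((Pi.single i 1 : Fin N → ℕ) j) * prodL D t (Pi.single i 1) = _
    rw [ih]
    rcases eq_or_ne j i with rfl | hne
    · rw [Pi.single_eq_same, pow_one, List.count_cons_self, ← pow_succ']
    · rw [Pi.single_eq_of_ne hne, pow_zero, one_mul, List.count_cons_of_ne hne]

lemma PP_add (hcomm : ∀ (i j : Fin N) (x : A), D i (D j x) = D j (D i x))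
    (α β : Fin N → ℕ) : PP D (α + β) = PP D α * PP D β :=
  prodL_add D hcomm _ α β

lemma PP_zero : PP D (0 : Fin N → ℕ) = 1 := prodL_zero D _

lemma PP_single (i : Fin N) : PP D (Pi.single i 1) = toEnd (D i) := by
  rw [PP, prodL_single,
    List.count_eq_one_of_mem (List.nodup_finRange N) (List.mem_finRange i), pow_one]

end EndStuff

/-- antidiagonal of a multi-index -/
noncomputable def AD {N : ℕ} (α : Fin N → ℕ) : Finset ((Fin N → ℕ) × (Fin N → ℕ)) :=
  (Fintype.piFinset fun i => Finset.range (α i + 1)).image fun β => (β, α - β)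

lemma mem_AD {N : ℕ} {α : Fin N → ℕ} {p : (Fin N → ℕ) × (Fin N → ℕ)} :
    p ∈ AD α ↔ p.1 + p.2 = α := by
  constructor
  · intro hp
    rw [AD, Finset.mem_image] at hp
    obtain ⟨β, hβ, rfl⟩ := hp
    rw [Fintype.mem_piFinset] at hβ
    funext i
    have := Finset.mem_range.mp (hβ i)
    show β i + (α i - β i) = α i
    omega
  · intro hp
    rw [AD, Finset.mem_image]
    refine ⟨p.1, ?_, ?_⟩
    · rw [Fintype.mem_piFinset]
      intro i
      have := congr_fun hp i
      simp only [Pi.add_apply] at this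
      exact Finset.mem_range.mpr (by omega)
    · refine Prod.ext rfl ?_
      funext i
      have := congr_fun hp i
      simp only [Pi.add_apply] at this
      show α i - p.1 i = p.2 i
      omega

/-- multivariate Pascal identity -/
lemma pascal {N : ℕ} (α : Fin N → ℕ) (i : Fin N) (hi : α i ≠ 0) (β : Fin N → ℕ) :
    (∏ j, (α j).choose (β j)) =
      (∏ j, ((Function.update α i (α i - 1)) j).choose (β j)) +
      (if 1 ≤ β i then
          ∏ j, ((Function.update α i (α i - 1)) j).choose
            ((Function.update β i (β i - 1)) j)
        else 0) := by
  rcases Nat.eq_zero_or_pos (β i) with hb | hb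
  · rw [if_neg (by omega), add_zero]
    refine Finset.prod_congr rfl fun j _ => ?_
    rcases eq_or_ne j i with rfl | hne
    · rw [hb, Nat.choose_zero_right, Nat.choose_zero_right]
    · rw [Function.update_of_ne hne]
  · rw [if_pos (show 1 ≤ β i from hb),
      ← Finset.mul_prod_erase Finset.univ (fun j => (α j).choose (β j)) (Finset.mem_univ i),
      ← Finset.mul_prod_erase Finset.univ
        (fun j => ((Function.update α i (α i - 1)) j).choose (β j)) (Finset.mem_univ i),
      ← Finset.mul_prod_erase Finset.univ
        (fun j => ((Function.update α i (α i - 1)) j).choose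
          ((Function.update β i (β i - 1)) j)) (Finset.mem_univ i)]
    have he1 : (∏ j ∈ Finset.univ.erase i,
        ((Function.update α i (α i - 1)) j).choose (β j)) =
        ∏ j ∈ Finset.univ.erase i, (α j).choose (β j) :=
      Finset.prod_congr rfl fun j hj => by
        rw [Function.update_of_ne (Finset.ne_of_mem_erase hj)]
    have he2 : (∏ j ∈ Finset.univ.erase i,
        ((Function.update α i (α i - 1)) j).choose ((Function.update β i (β i - 1)) j)) =
        ∏ j ∈ Finset.univ.erase i, (α j).choose (β j) :=
      Finset.prod_congr rfl fun j hj => by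
        rw [Function.update_of_ne (Finset.ne_of_mem_erase hj),
          Function.update_of_ne (Finset.ne_of_mem_erase hj)]
    rw [he1, he2, ← add_mul]
    congr 1
    obtain ⟨a, ha⟩ : ∃ a, α i = a + 1 := ⟨α i - 1, by omega⟩
    obtain ⟨b, hbe⟩ : ∃ b, β i = b + 1 := ⟨β i - 1, by omega⟩
    rw [ha, hbe, Nat.add_sub_cancel, Nat.add_sub_cancel, Nat.choose_succ_succ,
      Nat.add_comm]
    simp [Function.update_self]

section Leibniz

variable {A : Type*} [Ring A] {N : ℕ}

lemma leibniz (D : Fin N → A →+ A)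
    (hleib : ∀ (i : Fin N) (x y : A), D i (x * y) = D i x * y + x * D i y)
    (hcomm : ∀ (i j : Fin N) (x : A), D i (D j x) = D j (D i x)) :
    ∀ (k : ℕ) (α : Fin N → ℕ), (∑ i, α i) = k → ∀ x y : A,
    PP D α (x * y) =
      ∑ p ∈ AD α, (∏ j, (α j).choose (p.1 j)) • (PP D p.1 x * PP D p.2 y) := by
  intro k
  induction k with
  | zero =>
    intro α hα x y
    have hα0 : α = 0 := funext fun i =>
      Finset.sum_eq_zero_iff.mp hα i (Finset.mem_univ i)
    subst hα0
    have hAD : AD (0 : Fin N → ℕ) = {((0 : Fin N → ℕ), (0 : Fin N → ℕ))} := by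
      ext p
      rw [Finset.mem_singleton, mem_AD]
      constructor
      · intro hp
        have h1 : p.1 = 0 := funext fun i => by
          have := congr_fun hp i; simp only [Pi.add_apply, Pi.zero_apply] at this ⊢; omega
        have h2 : p.2 = 0 := funext fun i => by
          have := congr_fun hp i; simp only [Pi.add_apply, Pi.zero_apply] at this ⊢; omega
        exact Prod.ext h1 h2
      · rintro rfl; simp
    rw [hAD, Finset.sum_singleton]
    simp [PP_zero]
  | succ k ih =>
    intro α hα x y
    obtain ⟨i, -, hi⟩ := Finset.exists_ne_zero_of_sum_ne_zero
      (f := α) (by rw [hα]; exact Nat.succ_ne_zero k)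
    set α' := Function.update α i (α i - 1) with hα'def
    have hsplit : Pi.single i 1 + α' = α := by
      funext j
      rcases eq_or_ne j i with rfl | hne
      · show (Pi.single j 1 : Fin N → ℕ) j + Function.update α j (α j - 1) j = α j
        rw [Pi.single_eq_same, Function.update_self]; omega
      · show (Pi.single i 1 : Fin N → ℕ) j + Function.update α i (α i - 1) j = α j
        rw [Pi.single_eq_of_ne hne, Function.update_of_ne hne]; omega
    have hsum' : (∑ j, α' j) = k := by
      have h1 := Finset.sum_update_of_mem (Finset.mem_univ i) α (α i - 1)
      have h2 := Finset.sum_eq_sum_sdiff_singleton_add (Finset.mem_univ i) α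
      rw [hα'def]
      omega
    have hrec := ih α' hsum'
    have happ : ∀ (β : Fin N → ℕ) (z : A), PP D (Pi.single i 1 + β) z = D i (PP D β z) := by
      intro β z
      rw [PP_add D hcomm, PP_single D]
      rfl
    have step1 : PP D α (x * y) =
        (∑ p ∈ AD α', (∏ j, (α' j).choose (p.1 j)) •
          (PP D (Pi.single i 1 + p.1) x * PP D p.2 y)) +
        ∑ p ∈ AD α', (∏ j, (α' j).choose (p.1 j)) •
          (PP D p.1 x * PP D (Pi.single i 1 + p.2) y) := by
      rw [← hsplit, happ, hrec x y, map_sum, ← Finset.sum_add_distrib]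
      refine Finset.sum_congr rfl fun p hp => ?_
      rw [map_nsmul, hleib i, smul_add, happ, happ]
    rw [step1]
    have hsplitsum : (∑ p ∈ AD α, (∏ j, (α j).choose (p.1 j)) •
          (PP D p.1 x * PP D p.2 y)) =
        (∑ p ∈ AD α, (∏ j, (α' j).choose (p.1 j)) • (PP D p.1 x * PP D p.2 y)) +
        ∑ p ∈ AD α, (if 1 ≤ p.1 i then
            ∏ j, (α' j).choose ((Function.update p.1 i (p.1 i - 1)) j)
          else 0) • (PP D p.1 x * PP D p.2 y) := by
      rw [← Finset.sum_add_distrib]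
      refine Finset.sum_congr rfl fun p _ => ?_
      rw [← add_smul, ← pascal α i hi p.1]
    rw [hsplitsum]
    have hclaim2 : (∑ p ∈ AD α', (∏ j, (α' j).choose (p.1 j)) •
          (PP D p.1 x * PP D (Pi.single i 1 + p.2) y)) =
        ∑ p ∈ AD α, (∏ j, (α' j).choose (p.1 j)) • (PP D p.1 x * PP D p.2 y) := by
      have hvanish : ∀ p ∈ AD α, p ∉ (AD α).filter (fun p => p.2 i ≠ 0) →
          (∏ j, (α' j).choose (p.1 j)) • (PP D p.1 x * PP D p.2 y) = 0 := by
        intro p hp hnp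
        have h2 : p.2 i = 0 := by
          by_contra hne; exact hnp (Finset.mem_filter.mpr ⟨hp, hne⟩)
        have hpq : p.1 i + p.2 i = α i := by
          have := congr_fun (mem_AD.mp hp) i
          simpa using this
        have hlt : α' i < p.1 i := by
          rw [hα'def, Function.update_self]; omega
        rw [show (∏ j, (α' j).choose (p.1 j)) = 0 from
          Finset.prod_eq_zero (Finset.mem_univ i) (Nat.choose_eq_zero_of_lt hlt),
          zero_smul]
      rw [← Finset.sum_subset (Finset.filter_subset _ _) hvanish]
      refine Finset.sum_nbij' (fun p => (p.1, Pi.single i 1 + p.2))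
        (fun p => (p.1, Function.update p.2 i (p.2 i - 1))) ?_ ?_ ?_ ?_ ?_
      · intro p hp
        refine Finset.mem_filter.mpr ⟨mem_AD.mpr ?_, ?_⟩
        · rw [add_left_comm, mem_AD.mp hp, hsplit]
        · show (Pi.single i 1 + p.2 : Fin N → ℕ) i ≠ 0
          simp [Pi.single_eq_same]
      · intro p hp
        obtain ⟨hp1, hp2⟩ := Finset.mem_filter.mp hp
        have hpq : p.1 i + p.2 i = α i := by
          have := congr_fun (mem_AD.mp hp1) i; simpa using this
        refine mem_AD.mpr ?_
        funext j
        rcases eq_or_ne j i with rfl | hne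
        · show p.1 j + Function.update p.2 j (p.2 j - 1) j = α' j
          rw [Function.update_self, hα'def, Function.update_self]
          omega
        · show p.1 j + Function.update p.2 i (p.2 i - 1) j = α' j
          rw [Function.update_of_ne hne, hα'def, Function.update_of_ne hne]
          have := congr_fun (mem_AD.mp hp1) j
          simpa using this
      · intro p hp
        refine Prod.ext rfl ?_
        show Function.update (Pi.single i 1 + p.2 : Fin N → ℕ) i ((Pi.single i 1 + p.2 : Fin N → ℕ) i - 1) = p.2
        funext j
        rcases eq_or_ne j i with rfl | hne
        · rw [Function.update_self]
          show (Pi.single j 1 : Fin N → ℕ) j + p.2 j - 1 = p.2 j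
          rw [Pi.single_eq_same]; omega
        · rw [Function.update_of_ne hne]
          show (Pi.single i 1 : Fin N → ℕ) j + p.2 j = p.2 j
          rw [Pi.single_eq_of_ne hne]; omega
      · intro p hp
        obtain ⟨hp1, hp2⟩ := Finset.mem_filter.mp hp
        refine Prod.ext rfl ?_
        show Pi.single i 1 + Function.update p.2 i (p.2 i - 1) = (p.2 : Fin N → ℕ)
        funext j
        rcases eq_or_ne j i with rfl | hne
        · show (Pi.single j 1 : Fin N → ℕ) j + Function.update p.2 j (p.2 j - 1) j = p.2 j
          rw [Pi.single_eq_same, Function.update_self]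
          omega
        · show (Pi.single i 1 : Fin N → ℕ) j + Function.update p.2 i (p.2 i - 1) j = p.2 j
          rw [Pi.single_eq_of_ne hne, Function.update_of_ne hne]; omega
      · intro p hp; rfl
    have hclaim1 : (∑ p ∈ AD α', (∏ j, (α' j).choose (p.1 j)) •
          (PP D (Pi.single i 1 + p.1) x * PP D p.2 y)) =
        ∑ p ∈ AD α, (if 1 ≤ p.1 i then
            ∏ j, (α' j).choose ((Function.update p.1 i (p.1 i - 1)) j)
          else 0) • (PP D p.1 x * PP D p.2 y) := by
      have hvanish : ∀ p ∈ AD α, p ∉ (AD α).filter (fun p => p.1 i ≠ 0) →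
          (if 1 ≤ p.1 i then
            ∏ j, (α' j).choose ((Function.update p.1 i (p.1 i - 1)) j)
          else 0) • (PP D p.1 x * PP D p.2 y) = 0 := by
        intro p hp hnp
        have h2 : p.1 i = 0 := by
          by_contra hne; exact hnp (Finset.mem_filter.mpr ⟨hp, hne⟩)
        rw [if_neg (by omega), zero_smul]
      rw [← Finset.sum_subset (Finset.filter_subset _ _) hvanish]
      refine Finset.sum_nbij' (fun p => (Pi.single i 1 + p.1, p.2))
        (fun p => (Function.update p.1 i (p.1 i - 1), p.2)) ?_ ?_ ?_ ?_ ?_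
      · intro p hp
        refine Finset.mem_filter.mpr ⟨mem_AD.mpr ?_, ?_⟩
        · show (Pi.single i 1 : Fin N → ℕ) + p.1 + p.2 = α
          rw [add_assoc, mem_AD.mp hp, hsplit]
        · show (Pi.single i 1 + p.1 : Fin N → ℕ) i ≠ 0
          simp [Pi.single_eq_same]
      · intro p hp
        obtain ⟨hp1, hp2⟩ := Finset.mem_filter.mp hp
        refine mem_AD.mpr ?_
        funext j
        rcases eq_or_ne j i with rfl | hne
        · show Function.update p.1 j (p.1 j - 1) j + p.2 j = α' j
          rw [Function.update_self, hα'def, Function.update_self]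
          have := congr_fun (mem_AD.mp hp1) j
          simp only [Pi.add_apply] at this
          omega
        · show Function.update p.1 i (p.1 i - 1) j + p.2 j = α' j
          rw [Function.update_of_ne hne, hα'def, Function.update_of_ne hne]
          have := congr_fun (mem_AD.mp hp1) j
          simpa using this
      · intro p hp
        refine Prod.ext ?_ rfl
        show Function.update (Pi.single i 1 + p.1 : Fin N → ℕ) i ((Pi.single i 1 + p.1 : Fin N → ℕ) i - 1) = p.1
        funext j
        rcases eq_or_ne j i with rfl | hne
        · rw [Function.update_self]
          show (Pi.single j 1 : Fin N → ℕ) j + p.1 j - 1 = p.1 j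
          rw [Pi.single_eq_same]; omega
        · rw [Function.update_of_ne hne]
          show (Pi.single i 1 : Fin N → ℕ) j + p.1 j = p.1 j
          rw [Pi.single_eq_of_ne hne]; omega
      · intro p hp
        obtain ⟨hp1, hp2⟩ := Finset.mem_filter.mp hp
        refine Prod.ext ?_ rfl
        show Pi.single i 1 + Function.update p.1 i (p.1 i - 1) = (p.1 : Fin N → ℕ)
        funext j
        rcases eq_or_ne j i with rfl | hne
        · show (Pi.single j 1 : Fin N → ℕ) j + Function.update p.1 j (p.1 j - 1) j = p.1 j
          rw [Pi.single_eq_same, Function.update_self]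
          omega
        · show (Pi.single i 1 : Fin N → ℕ) j + Function.update p.1 i (p.1 i - 1) j = p.1 j
          rw [Pi.single_eq_of_ne hne, Function.update_of_ne hne]; omega
      · intro p hp
        have hcond : 1 ≤ (Pi.single i 1 + p.1 : Fin N → ℕ) i := by
          simp [Pi.single_eq_same]
        have hupd : Function.update (Pi.single i 1 + p.1 : Fin N → ℕ) i
            ((Pi.single i 1 + p.1 : Fin N → ℕ) i - 1) = p.1 := by
          funext j
          rcases eq_or_ne j i with rfl | hne
          · rw [Function.update_self]
            show (Pi.single j 1 : Fin N → ℕ) j + p.1 j - 1 = p.1 j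
            rw [Pi.single_eq_same]; omega
          · rw [Function.update_of_ne hne]
            show (Pi.single i 1 : Fin N → ℕ) j + p.1 j = p.1 j
            rw [Pi.single_eq_of_ne hne]; omega
        show (∏ j, (α' j).choose (p.1 j)) • (PP D (Pi.single i 1 + p.1) x * PP D p.2 y) = _
        rw [if_pos hcond, hupd]
    rw [hclaim1, hclaim2, add_comm]

end Leibniz

section NormStuff

variable {A : Type*} [NormedRing A] {N : ℕ}

lemma norm_leibniz (D : Fin N → A →+ A)
    (hleib : ∀ (i : Fin N) (x y : A), D i (x * y) = D i x * y + x * D i y)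
    (hcomm : ∀ (i j : Fin N) (x : A), D i (D j x) = D j (D i x))
    (α : Fin N → ℕ) (x y : A) :
    ‖PP D α (x * y)‖ ≤ ∑ p ∈ AD α,
      ((∏ j, (α j).choose (p.1 j) : ℕ) : ℝ) * (‖PP D p.1 x‖ * ‖PP D p.2 y‖) := by
  rw [leibniz D hleib hcomm _ α rfl x y]
  refine (norm_sum_le _ _).trans (Finset.sum_le_sum fun p _ => ?_)
  refine norm_nsmul_le.trans ?_
  exact mul_le_mul_of_nonneg_left (norm_mul_le _ _) (Nat.cast_nonneg _)

end NormStuff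

lemma lemA {N : ℕ} (F : Finset (Fin N → ℕ))
    (hF : ∀ α ∈ F, ∀ β : Fin N → ℕ, (∀ i, β i ≤ α i) → β ∈ F)
    (g : (Fin N → ℕ) × (Fin N → ℕ) → ℝ) (hg : ∀ p, 0 ≤ g p) :
    (∑ α ∈ F, ∑ p ∈ AD α, g p) ≤ ∑ β ∈ F, ∑ γ ∈ F, g (β, γ) := by
  classical
  have hdisj : (↑F : Set (Fin N → ℕ)).PairwiseDisjoint AD := by
    intro a _ b _ hab
    refine Finset.disjoint_left.mpr fun p hpa hpb => hab ?_
    rw [← mem_AD.mp hpa, ← mem_AD.mp hpb]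
  calc (∑ α ∈ F, ∑ p ∈ AD α, g p) = ∑ p ∈ F.biUnion AD, g p :=
        (Finset.sum_biUnion hdisj).symm
    _ ≤ ∑ p ∈ F ×ˢ F, g p := by
        refine Finset.sum_le_sum_of_subset_of_nonneg ?_ fun p _ _ => hg p
        intro p hp
        obtain ⟨α, hαF, hpα⟩ := Finset.mem_biUnion.mp hp
        have hpq := mem_AD.mp hpα
        refine Finset.mem_product.mpr ⟨?_, ?_⟩
        · refine hF α hαF p.1 fun i => ?_
          have := congr_fun hpq i; simp only [Pi.add_apply] at this; omega
        · refine hF α hαF p.2 fun i => ?_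
          have := congr_fun hpq i; simp only [Pi.add_apply] at this; omega
    _ = ∑ β ∈ F, ∑ γ ∈ F, g (β, γ) := Finset.sum_product _ _ _

set_option maxHeartbeats 1000000 in
lemma lemK {n : ℕ} (g : Finset (Fin n) → Finset (Fin n) → ℝ)
    (hg : ∀ I J, 0 ≤ g I J) :
    (∑ K : Finset (Fin n), ∑ I ∈ K.powerset, g I (K \ I)) ≤
      ∑ I : Finset (Fin n), ∑ J : Finset (Fin n), g I J := by
  classical
  set P := (Finset.univ ×ˢ (Finset.univ : Finset (Finset (Fin n)))).filter
    (fun p => p.2 ⊆ p.1) with hP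
  have e1 : (∑ K : Finset (Fin n), ∑ I ∈ K.powerset, g I (K \ I)) =
      ∑ p ∈ P, g p.2 (p.1 \ p.2) := by
    rw [hP, Finset.sum_filter, Finset.sum_product]
    refine Finset.sum_congr rfl fun K _ => ?_
    rw [← Finset.sum_filter]
    have : (Finset.univ.filter fun I : Finset (Fin n) => I ⊆ K) = K.powerset := by
      ext I; simp [Finset.mem_powerset]
    rw [this]
  rw [e1]
  have hinj : ∀ x ∈ P, ∀ y ∈ P,
      (fun p : Finset (Fin n) × Finset (Fin n) => (p.2, p.1 \ p.2)) x =
        (fun p : Finset (Fin n) × Finset (Fin n) => (p.2, p.1 \ p.2)) y → x = y := by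
    intro x hx y hy hxy
    simp only [Prod.mk.injEq] at hxy
    obtain ⟨h1, h2⟩ := hxy
    have hxs := (Finset.mem_filter.mp hx).2
    have hys := (Finset.mem_filter.mp hy).2
    have hx1 : x.1 = x.2 ∪ (x.1 \ x.2) := (Finset.union_sdiff_of_subset hxs).symm
    have hy1 : y.1 = y.2 ∪ (y.1 \ y.2) := (Finset.union_sdiff_of_subset hys).symm
    refine Prod.ext ?_ h1
    rw [hx1, hy1, h2, h1]
  calc (∑ p ∈ P, g p.2 (p.1 \ p.2)) =
        ∑ q ∈ P.image (fun p => (p.2, p.1 \ p.2)), g q.1 q.2 :=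
        (Finset.sum_image (f := fun q : Finset (Fin n) × Finset (Fin n) => g q.1 q.2) hinj).symm
    _ ≤ ∑ q ∈ (Finset.univ ×ˢ (Finset.univ : Finset (Finset (Fin n)))), g q.1 q.2 := by
        refine Finset.sum_le_sum_of_subset_of_nonneg ?_ fun q _ _ => hg _ _
        intro q _
        exact Finset.mem_product.mpr ⟨Finset.mem_univ _, Finset.mem_univ _⟩
    _ = ∑ I : Finset (Fin n), ∑ J : Finset (Fin n), g I J := Finset.sum_product _ _ _

end Stmt9Aux

open Stmt9Aux Finset

theorem stmt9 {A : Type*} [NormedRing A] (n N : ℕ)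
    (Dop : Fin N → A →+ A)
    (hleib : ∀ (i : Fin N) (x y : A), Dop i (x * y) = Dop i x * y + x * Dop i y)
    (hcomm : ∀ (i j : Fin N) (x : A), Dop i (Dop j x) = Dop j (Dop i x))
    (S : ℕ → ℝ) (hS0 : S 0 = 1) (hSpos : ∀ k, 0 < S k)
    (hS : ∀ (k j : ℕ), 1 ≤ j → j ≤ k - 1 →
      ∀ α β : Fin N → ℕ, (∑ i, α i) = j → (∑ i, β i) = k - j →
        (∏ i, ((α i + β i).choose (α i) : ℝ)) * S k ≤ S j * S (k - j))
    (r : ℝ) (hr : 0 < r) (h q pdeg : ℕ)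
    (ε : Finset (Fin n) → Finset (Fin n) → ℤ)
    (hε : ∀ I J, ε I J = 0 ∨ ε I J = 1 ∨ ε I J = -1)
    (u v : Finset (Fin n) → A)
    (hu : ∀ I : Finset (Fin n), I.card ≠ q → u I = 0)
    (hv : ∀ J : Finset (Fin n), J.card ≠ pdeg → v J = 0) :
    hnorm n N Dop S r h (fun K => ∑ I ∈ K.powerset, ε I (K \ I) • (u I * v (K \ I)))
      ≤ hnorm n N Dop S r h u * hnorm n N Dop S r h v := by
  classical
  -- the index set for multi-indices
  set F := (Fintype.piFinset fun _ : Fin N => Finset.range (h + 1)).filter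
      (fun α => (∑ i, α i) ≤ h) with hFdef
  have hFdc : ∀ α ∈ F, ∀ β : Fin N → ℕ, (∀ i, β i ≤ α i) → β ∈ F := by
    intro α hα β hle
    rw [hFdef, Finset.mem_filter] at hα ⊢
    obtain ⟨hα1, hα2⟩ := hα
    rw [Fintype.mem_piFinset] at hα1
    refine ⟨Fintype.mem_piFinset.mpr fun i => ?_, ?_⟩
    · have := Finset.mem_range.mp (hα1 i)
      exact Finset.mem_range.mpr (by have := hle i; omega)
    · exact le_trans (Finset.sum_le_sum fun i _ => hle i) hα2
  -- extended weight inequality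
  have hS' : ∀ β γ : Fin N → ℕ,
      ((∏ i, (β i + γ i).choose (β i) : ℕ) : ℝ) * S ((∑ i, β i) + ∑ i, γ i)
        ≤ S (∑ i, β i) * S (∑ i, γ i) := by
    intro β γ
    rcases Nat.eq_zero_or_pos (∑ i, β i) with hb | hb
    · have hβ0 : ∀ i, β i = 0 := fun i =>
        Finset.sum_eq_zero_iff.mp hb i (Finset.mem_univ i)
      have : (∏ i, (β i + γ i).choose (β i)) = 1 :=
        Finset.prod_eq_one fun i _ => by rw [hβ0 i, Nat.choose_zero_right]
      rw [this, hb, hS0, zero_add]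
      simp
    · rcases Nat.eq_zero_or_pos (∑ i, γ i) with hc | hc
      · have hγ0 : ∀ i, γ i = 0 := fun i =>
          Finset.sum_eq_zero_iff.mp hc i (Finset.mem_univ i)
        have : (∏ i, (β i + γ i).choose (β i)) = 1 :=
          Finset.prod_eq_one fun i _ => by rw [hγ0 i, Nat.add_zero, Nat.choose_self]
        rw [this, hc, hS0, add_zero]
        simp
      · have hkey := hS ((∑ i, β i) + ∑ i, γ i) (∑ i, β i) hb (by omega) β γ rfl (by omega)
        rw [Nat.add_sub_cancel_left] at hkey
        calc ((∏ i, (β i + γ i).choose (β i) : ℕ) : ℝ) * S ((∑ i, β i) + ∑ i, γ i)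
            = (∏ i, ((β i + γ i).choose (β i) : ℝ)) * S ((∑ i, β i) + ∑ i, γ i) := by
              rw [Nat.cast_prod]
          _ ≤ S (∑ i, β i) * S (∑ i, γ i) := hkey
  -- the key pointwise bound
  have step1 : ∀ (K : Finset (Fin n)) (α : Fin N → ℕ),
      S (∑ i, α i) * r ^ ((∑ i, α i) + K.card) *
        ‖PP Dop α (∑ I ∈ K.powerset, ε I (K \ I) • (u I * v (K \ I)))‖
      ≤ ∑ I ∈ K.powerset, ∑ p ∈ AD α,
          (S (∑ i, p.1 i) * r ^ ((∑ i, p.1 i) + I.card) * ‖PP Dop p.1 (u I)‖) *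
          (S (∑ i, p.2 i) * r ^ ((∑ i, p.2 i) + (K \ I).card) * ‖PP Dop p.2 (v (K \ I))‖) := by
    intro K α
    have hc : 0 ≤ S (∑ i, α i) * r ^ ((∑ i, α i) + K.card) :=
      mul_nonneg (hSpos _).le (pow_nonneg hr.le _)
    have hb1 : ‖PP Dop α (∑ I ∈ K.powerset, ε I (K \ I) • (u I * v (K \ I)))‖ ≤
        ∑ I ∈ K.powerset, ∑ p ∈ AD α,
          ((∏ j, (α j).choose (p.1 j) : ℕ) : ℝ) *
            (‖PP Dop p.1 (u I)‖ * ‖PP Dop p.2 (v (K \ I))‖) := by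
      rw [map_sum]
      refine (norm_sum_le _ _).trans (Finset.sum_le_sum fun I _ => ?_)
      have h2 : ‖PP Dop α (ε I (K \ I) • (u I * v (K \ I)))‖ ≤
          ‖PP Dop α (u I * v (K \ I))‖ := by
        rw [map_zsmul]
        rcases hε I (K \ I) with he | he | he <;> rw [he]
        · simp
        · simp
        · simp
      exact h2.trans (norm_leibniz Dop hleib hcomm α (u I) (v (K \ I)))
    calc S (∑ i, α i) * r ^ ((∑ i, α i) + K.card) *
          ‖PP Dop α (∑ I ∈ K.powerset, ε I (K \ I) • (u I * v (K \ I)))‖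
        ≤ S (∑ i, α i) * r ^ ((∑ i, α i) + K.card) *
          (∑ I ∈ K.powerset, ∑ p ∈ AD α,
            ((∏ j, (α j).choose (p.1 j) : ℕ) : ℝ) *
              (‖PP Dop p.1 (u I)‖ * ‖PP Dop p.2 (v (K \ I))‖)) :=
          mul_le_mul_of_nonneg_left hb1 hc
      _ = ∑ I ∈ K.powerset, ∑ p ∈ AD α,
            S (∑ i, α i) * r ^ ((∑ i, α i) + K.card) *
              (((∏ j, (α j).choose (p.1 j) : ℕ) : ℝ) *
                (‖PP Dop p.1 (u I)‖ * ‖PP Dop p.2 (v (K \ I))‖)) := by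
          rw [Finset.mul_sum]
          exact Finset.sum_congr rfl fun I _ => Finset.mul_sum _ _ _
      _ ≤ _ := by
          refine Finset.sum_le_sum fun I hI => Finset.sum_le_sum fun p hp => ?_
          have hsub := Finset.mem_powerset.mp hI
          have hKc : K.card = I.card + (K \ I).card := by
            rw [Finset.card_sdiff_of_subset hsub]
            have := Finset.card_le_card hsub
            omega
          have hpq := mem_AD.mp hp
          have hsumα : (∑ i, α i) = (∑ i, p.1 i) + (∑ i, p.2 i) := by
            rw [← hpq]
            simp [Finset.sum_add_distrib]
          have hCeq : ((∏ j, (α j).choose (p.1 j) : ℕ) : ℝ) =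
              ((∏ j, (p.1 j + p.2 j).choose (p.1 j) : ℕ) : ℝ) := by
            congr 1
            refine Finset.prod_congr rfl fun j _ => ?_
            have := congr_fun hpq j
            simp only [Pi.add_apply] at this
            rw [← this]
          rw [hsumα, hKc, hCeq]
          have hrpow : r ^ (((∑ i, p.1 i) + ∑ i, p.2 i) + (I.card + (K \ I).card)) =
              r ^ ((∑ i, p.1 i) + I.card) * r ^ ((∑ i, p.2 i) + (K \ I).card) := by
            rw [← pow_add]
            congr 1
            omega
          rw [hrpow]
          have key := hS' p.1 p.2
          have hZ : (0 : ℝ) ≤ r ^ ((∑ i, p.1 i) + I.card) * ‖PP Dop p.1 (u I)‖ *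
              (r ^ ((∑ i, p.2 i) + (K \ I).card) * ‖PP Dop p.2 (v (K \ I))‖) := by
            positivity
          calc S ((∑ i, p.1 i) + ∑ i, p.2 i) *
                (r ^ ((∑ i, p.1 i) + I.card) * r ^ ((∑ i, p.2 i) + (K \ I).card)) *
                (((∏ j, (p.1 j + p.2 j).choose (p.1 j) : ℕ) : ℝ) *
                  (‖PP Dop p.1 (u I)‖ * ‖PP Dop p.2 (v (K \ I))‖))
              = ((∏ j, (p.1 j + p.2 j).choose (p.1 j) : ℕ) : ℝ) *
                  S ((∑ i, p.1 i) + ∑ i, p.2 i) *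
                (r ^ ((∑ i, p.1 i) + I.card) * ‖PP Dop p.1 (u I)‖ *
                  (r ^ ((∑ i, p.2 i) + (K \ I).card) * ‖PP Dop p.2 (v (K \ I))‖)) := by
                ring
            _ ≤ S (∑ i, p.1 i) * S (∑ i, p.2 i) *
                (r ^ ((∑ i, p.1 i) + I.card) * ‖PP Dop p.1 (u I)‖ *
                  (r ^ ((∑ i, p.2 i) + (K \ I).card) * ‖PP Dop p.2 (v (K \ I))‖)) :=
                mul_le_mul_of_nonneg_right key hZ
            _ = _ := by ring
  -- nonnegativity of the elementary terms
  have ht : ∀ (w : Finset (Fin n) → A) (I : Finset (Fin n)) (β : Fin N → ℕ),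
      0 ≤ S (∑ i, β i) * r ^ ((∑ i, β i) + I.card) * ‖PP Dop β (w I)‖ :=
    fun w I β => mul_nonneg (mul_nonneg (hSpos _).le (pow_nonneg hr.le _)) (norm_nonneg _)
  -- assemble
  calc hnorm n N Dop S r h (fun K => ∑ I ∈ K.powerset, ε I (K \ I) • (u I * v (K \ I)))
      = ∑ K : Finset (Fin n), ∑ α ∈ F,
          S (∑ i, α i) * r ^ ((∑ i, α i) + K.card) *
            ‖PP Dop α (∑ I ∈ K.powerset, ε I (K \ I) • (u I * v (K \ I)))‖ := by
        simp only [hnorm, pderiv_eq, hFdef]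
    _ ≤ ∑ K : Finset (Fin n), ∑ α ∈ F, ∑ I ∈ K.powerset, ∑ p ∈ AD α,
          (S (∑ i, p.1 i) * r ^ ((∑ i, p.1 i) + I.card) * ‖PP Dop p.1 (u I)‖) *
          (S (∑ i, p.2 i) * r ^ ((∑ i, p.2 i) + (K \ I).card) * ‖PP Dop p.2 (v (K \ I))‖) :=
        Finset.sum_le_sum fun K _ => Finset.sum_le_sum fun α _ => step1 K α
    _ = ∑ K : Finset (Fin n), ∑ I ∈ K.powerset, ∑ α ∈ F, ∑ p ∈ AD α,
          (S (∑ i, p.1 i) * r ^ ((∑ i, p.1 i) + I.card) * ‖PP Dop p.1 (u I)‖) *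
          (S (∑ i, p.2 i) * r ^ ((∑ i, p.2 i) + (K \ I).card) * ‖PP Dop p.2 (v (K \ I))‖) :=
        Finset.sum_congr rfl fun K _ => Finset.sum_comm
    _ ≤ ∑ K : Finset (Fin n), ∑ I ∈ K.powerset,
          (∑ β ∈ F, S (∑ i, β i) * r ^ ((∑ i, β i) + I.card) * ‖PP Dop β (u I)‖) *
          (∑ γ ∈ F, S (∑ i, γ i) * r ^ ((∑ i, γ i) + (K \ I).card) * ‖PP Dop γ (v (K \ I))‖) := by
        refine Finset.sum_le_sum fun K _ => Finset.sum_le_sum fun I _ => ?_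
        have := lemA F hFdc
          (fun p => (S (∑ i, p.1 i) * r ^ ((∑ i, p.1 i) + I.card) * ‖PP Dop p.1 (u I)‖) *
            (S (∑ i, p.2 i) * r ^ ((∑ i, p.2 i) + (K \ I).card) * ‖PP Dop p.2 (v (K \ I))‖))
          (fun p => mul_nonneg (ht u I p.1) (ht v (K \ I) p.2))
        refine this.trans_eq ?_
        rw [Finset.sum_mul_sum]
    _ ≤ ∑ I : Finset (Fin n), ∑ J : Finset (Fin n),
          (∑ β ∈ F, S (∑ i, β i) * r ^ ((∑ i, β i) + I.card) * ‖PP Dop β (u I)‖) *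
          (∑ γ ∈ F, S (∑ i, γ i) * r ^ ((∑ i, γ i) + J.card) * ‖PP Dop γ (v J)‖) := by
        refine lemK (fun I J =>
          (∑ β ∈ F, S (∑ i, β i) * r ^ ((∑ i, β i) + I.card) * ‖PP Dop β (u I)‖) *
          (∑ γ ∈ F, S (∑ i, γ i) * r ^ ((∑ i, γ i) + J.card) * ‖PP Dop γ (v J)‖))
          (fun I J => mul_nonneg (Finset.sum_nonneg fun β _ => ht u I β)
            (Finset.sum_nonneg fun γ _ => ht v J γ))
    _ = hnorm n N Dop S r h u * hnorm n N Dop S r h v := by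
        simp only [hnorm, pderiv_eq, hFdef]
        rw [Finset.sum_mul_sum]
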